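/- Let k ≥ 2 be an integer and set ε = ((k−1)/k)². If H ∈ ℝ^{k×k} is a symmetric matrix with all diagonal entries zero and every off-diagonal entry in the interval (ε, 1], then H has exactly one strictly positive eigenvalue: its largest eigenvalue is strictly positive and the remaining k−1 eigenvalues, counted with multiplicity, are all ≤ 0. -/

import Mathlib

open Matrix Finset


set_option maxHeartbeats 1000000 in
lemma quad_nonpos
    (k : ℕ) (hk : 2 ≤ k)
    (H : Matrix (Fin k) (Fin k) ℝ)
    (hdiag : ∀ p, H p p = 0)
    (hlb : ∀ p q, p ≠ q → (((k : ℝ) - 1) / (k : ℝ)) ^ 2 < H p q)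
    (hub : ∀ p q, p ≠ q → H p q ≤ 1)
    (x : Fin k → ℝ) (hx : ∑ p, x p = 0) :
    ∑ p, ∑ q, x p * H p q * x q ≤ 0 := by
  classical
  have hK0 : (0:ℝ) < (k:ℝ) := by positivity
  have hK2 : (2:ℝ) ≤ (k:ℝ) := by exact_mod_cast hk
  obtain ⟨ε, hεdef⟩ : ∃ ε : ℝ, ε = (((k:ℝ) - 1) / (k:ℝ)) ^ 2 := ⟨_, rfl⟩
  have hlb' : ∀ p q, p ≠ q → ε < H p q := by rw [hεdef]; exact hlb
  have hε0 : 0 ≤ ε := hεdef ▸ sq_nonneg _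
  have hc : (1 - ε) * (k:ℝ) ^ 2 = 2 * (k:ℝ) - 1 := by
    rw [hεdef]; field_simp; ring
  have hε1 : ε ≤ 1 := by nlinarith [sq_nonneg ((k:ℝ))]
  obtain ⟨pos, hposdef⟩ : ∃ f : Fin k → ℝ, f = fun p => max (x p) 0 := ⟨_, rfl⟩
  obtain ⟨neg, hnegdef⟩ : ∃ f : Fin k → ℝ, f = fun p => max (-(x p)) 0 := ⟨_, rfl⟩
  have hpos0 : ∀ p, 0 ≤ pos p := fun p => by rw [hposdef]; exact le_max_right _ _
  have hneg0 : ∀ p, 0 ≤ neg p := fun p => by rw [hnegdef]; exact le_max_right _ _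
  have hsub : ∀ p, pos p - neg p = x p := by
    intro p
    rw [hposdef, hnegdef]
    rcases le_total (x p) 0 with h | h
    · simp [max_eq_right h, max_eq_left (by linarith : 0 ≤ -x p)]
    · simp [max_eq_left h, max_eq_right (by linarith : -x p ≤ 0)]
  have hmul0 : ∀ p, pos p * neg p = 0 := by
    intro p
    rw [hposdef, hnegdef]
    rcases le_total (x p) 0 with h | h
    · simp [max_eq_right h]
    · simp [max_eq_right (by linarith : -x p ≤ 0)]
  have hsq : ∀ p, pos p ^ 2 + neg p ^ 2 = x p ^ 2 := by
    intro p
    linear_combination (pos p - neg p + x p) * hsub p + 2 * hmul0 p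
  -- pointwise bound
  have hpoint : ∀ p q, x p * H p q * x q ≤
      (ε * (x p * x q) + (1 - ε) * (pos p * pos q + neg p * neg q))
        - (if p = q then x p ^ 2 else 0) := by
    intro p q
    by_cases h : p = q
    · subst h
      simp only [hdiag p, mul_zero, zero_mul, if_pos, eq_self_iff_true, if_true]
      have heq : ε * (x p * x p) + (1 - ε) * (pos p * pos p + neg p * neg p) - x p ^ 2 = 0 := by
        linear_combination (1 - ε) * hsq p
      linarith [heq]
    · simp only [if_neg h, sub_zero]
      have h1 := hlb' p q h
      have h2 := hub p q h
      have hxpq : x p * x q = pos p * pos q + neg p * neg q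
          - (pos p * neg q + neg p * pos q) := by
        rw [← hsub p, ← hsub q]; ring
      rcases le_or_gt 0 (x p * x q) with ht | ht
      · have hle : x p * x q ≤ pos p * pos q + neg p * neg q := by
          nlinarith [mul_nonneg (hpos0 p) (hneg0 q), mul_nonneg (hneg0 p) (hpos0 q)]
        nlinarith [mul_le_mul_of_nonneg_right h2 ht,
          mul_le_mul_of_nonneg_left hle (by linarith : (0:ℝ) ≤ 1 - ε)]
      · nlinarith [mul_nonneg (hpos0 p) (hpos0 q), mul_nonneg (hneg0 p) (hneg0 q)]
  have hsum1 : ∑ p, ∑ q, x p * H p q * x q ≤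
      ∑ p, ∑ q, ((ε * (x p * x q) + (1 - ε) * (pos p * pos q + neg p * neg q))
        - if p = q then x p ^ 2 else 0) :=
    Finset.sum_le_sum fun p _ => Finset.sum_le_sum fun q _ => hpoint p q
  obtain ⟨P, hPdef⟩ : ∃ P : ℝ, P = ∑ p, pos p := ⟨_, rfl⟩
  obtain ⟨N, hNdef⟩ : ∃ N : ℝ, N = ∑ p, neg p := ⟨_, rfl⟩
  have hPN : P = N := by
    have h : ∑ p, (pos p - neg p) = (0:ℝ) := by
      rw [Finset.sum_congr rfl fun p _ => hsub p]; exact hx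
    rw [Finset.sum_sub_distrib] at h
    rw [hPdef, hNdef]; linarith
  obtain ⟨a, hadef⟩ : ∃ a : ℝ, a = ∑ p, pos p ^ 2 := ⟨_, rfl⟩
  obtain ⟨b, hbdef⟩ : ∃ b : ℝ, b = ∑ p, neg p ^ 2 := ⟨_, rfl⟩
  have hab : a + b = ∑ p, x p ^ 2 := by
    rw [hadef, hbdef, ← Finset.sum_add_distrib]
    exact Finset.sum_congr rfl fun p _ => hsq p
  have ha0 : 0 ≤ a := hadef ▸ Finset.sum_nonneg fun p _ => sq_nonneg _
  have hb0 : 0 ≤ b := hbdef ▸ Finset.sum_nonneg fun p _ => sq_nonneg _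
  have hP0 : 0 ≤ P := hPdef ▸ Finset.sum_nonneg fun p _ => hpos0 p
  have hN0 : 0 ≤ N := hNdef ▸ Finset.sum_nonneg fun p _ => hneg0 p
  -- compute the main sum
  have hgsum : ∑ p, ∑ q, (ε * (x p * x q) + (1 - ε) * (pos p * pos q + neg p * neg q))
      = (1 - ε) * (P * P + N * N) := by
    have e1 : ∑ p, ∑ q, (x p * x q) = (∑ p, x p) * (∑ q, x q) :=
      (Finset.sum_mul_sum _ _ _ _).symm
    have e2 : ∑ p, ∑ q, (pos p * pos q) = (∑ p, pos p) * (∑ q, pos q) :=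
      (Finset.sum_mul_sum _ _ _ _).symm
    have e3 : ∑ p, ∑ q, (neg p * neg q) = (∑ p, neg p) * (∑ q, neg q) :=
      (Finset.sum_mul_sum _ _ _ _).symm
    simp only [Finset.sum_add_distrib, ← Finset.mul_sum, ← Finset.sum_mul]
    rw [hx, ← hPdef, ← hNdef]
    ring
  have hdiagsum : ∑ p : Fin k, ∑ q : Fin k, (if p = q then x p ^ 2 else (0:ℝ)) = a + b := by
    rw [hab]
    exact Finset.sum_congr rfl fun p _ => by simp
  -- Cauchy–Schwarz style bound on P * N
  obtain ⟨s, hsdef⟩ : ∃ s : Finset (Fin k), s = Finset.univ.filter fun p => 0 < x p := ⟨_, rfl⟩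
  obtain ⟨t, htdef⟩ : ∃ t : Finset (Fin k), t = Finset.univ.filter fun p => x p < 0 := ⟨_, rfl⟩
  have hst : Disjoint s t := by
    rw [hsdef, htdef, Finset.disjoint_left]
    intro p hp hq
    simp only [Finset.mem_filter] at hp hq
    linarith [hp.2, hq.2]
  have hcard : (s.card : ℝ) + (t.card : ℝ) ≤ (k:ℝ) := by
    have h1 := Finset.card_le_univ (s ∪ t)
    rw [Finset.card_union_of_disjoint hst] at h1
    have h2 : s.card + t.card ≤ k := by simpa using h1
    push_cast
    exact_mod_cast h2
  have hPs : P = ∑ p ∈ s, pos p := by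
    rw [hPdef]
    refine (Finset.sum_subset (Finset.subset_univ s) ?_).symm
    intro p _ hp
    rw [hsdef] at hp
    simp only [Finset.mem_filter, Finset.mem_univ, true_and, not_lt] at hp
    rw [hposdef]; exact max_eq_right hp
  have hNt : N = ∑ p ∈ t, neg p := by
    rw [hNdef]
    refine (Finset.sum_subset (Finset.subset_univ t) ?_).symm
    intro p _ hp
    rw [htdef] at hp
    simp only [Finset.mem_filter, Finset.mem_univ, true_and, not_lt] at hp
    rw [hnegdef]; exact max_eq_right (by linarith : -x p ≤ 0)
  have hP2 : P ^ 2 ≤ (s.card : ℝ) * a := by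
    rw [hPs]
    calc (∑ p ∈ s, pos p) ^ 2 ≤ (s.card : ℝ) * ∑ p ∈ s, pos p ^ 2 :=
          sq_sum_le_card_mul_sum_sq
      _ ≤ (s.card : ℝ) * a := by
          rw [hadef]
          exact mul_le_mul_of_nonneg_left (Finset.sum_le_sum_of_subset_of_nonneg
            (Finset.subset_univ s) fun p _ _ => sq_nonneg _) (Nat.cast_nonneg _)
  have hN2 : N ^ 2 ≤ (t.card : ℝ) * b := by
    rw [hNt]
    calc (∑ p ∈ t, neg p) ^ 2 ≤ (t.card : ℝ) * ∑ p ∈ t, neg p ^ 2 :=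
          sq_sum_le_card_mul_sum_sq
      _ ≤ (t.card : ℝ) * b := by
          rw [hbdef]
          exact mul_le_mul_of_nonneg_left (Finset.sum_le_sum_of_subset_of_nonneg
            (Finset.subset_univ t) fun p _ _ => sq_nonneg _) (Nat.cast_nonneg _)
  have hPNle : P * N ≤ (k:ℝ) * (a + b) / 4 := by
    have h1 : (P * N) ^ 2 ≤ ((s.card : ℝ) * a) * ((t.card : ℝ) * b) := by
      calc (P * N) ^ 2 = P ^ 2 * N ^ 2 := by ring
        _ ≤ ((s.card : ℝ) * a) * ((t.card : ℝ) * b) :=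
          mul_le_mul hP2 hN2 (sq_nonneg _) (mul_nonneg (Nat.cast_nonneg _) ha0)
    have h2 : ((s.card : ℝ) * (t.card : ℝ)) ≤ (k:ℝ) ^ 2 / 4 := by
      nlinarith [sq_nonneg ((s.card : ℝ) - (t.card : ℝ)), Nat.cast_nonneg (α := ℝ) s.card,
        Nat.cast_nonneg (α := ℝ) t.card]
    have h3 : a * b ≤ ((a + b) / 2) ^ 2 := by nlinarith [sq_nonneg (a - b)]
    have hsq2 : (P * N) ^ 2 ≤ ((k:ℝ) * (a + b) / 4) ^ 2 := by
      calc (P * N) ^ 2 ≤ ((s.card : ℝ) * (t.card : ℝ)) * (a * b) := by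
            rw [show ((s.card : ℝ) * (t.card : ℝ)) * (a * b)
              = ((s.card : ℝ) * a) * ((t.card : ℝ) * b) by ring]
            exact h1
        _ ≤ ((k:ℝ) ^ 2 / 4) * ((a + b) / 2) ^ 2 :=
            mul_le_mul h2 h3 (mul_nonneg ha0 hb0) (by positivity)
        _ = ((k:ℝ) * (a + b) / 4) ^ 2 := by ring
    exact le_of_pow_le_pow_left₀ two_ne_zero
      (div_nonneg (mul_nonneg hK0.le (by linarith)) (by norm_num)) hsq2
  -- final estimate
  have hfinal : (1 - ε) * (P * P + N * N) ≤ a + b := by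
    have h2PN : P * P + N * N = 2 * (P * N) := by rw [hPN]; ring
    rw [h2PN]
    have h5 : (2 * (k:ℝ) - 1) * (2 * (P * N)) ≤ (2 * (k:ℝ) - 1) * (2 * ((k:ℝ) * (a + b) / 4)) :=
      mul_le_mul_of_nonneg_left (by linarith) (by linarith)
    have h6 : (2 * (k:ℝ) - 1) * (2 * ((k:ℝ) * (a + b) / 4)) ≤ (k:ℝ) ^ 2 * (a + b) := by
      nlinarith [mul_nonneg (le_of_lt hK0) (by linarith : (0:ℝ) ≤ a + b)]
    have h7 : (1 - ε) * (2 * (P * N)) * (k:ℝ) ^ 2 ≤ (a + b) * (k:ℝ) ^ 2 := by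
      calc (1 - ε) * (2 * (P * N)) * (k:ℝ) ^ 2 = (2 * (k:ℝ) - 1) * (2 * (P * N)) := by
            rw [← hc]; ring
        _ ≤ (k:ℝ) ^ 2 * (a + b) := le_trans h5 h6
        _ = (a + b) * (k:ℝ) ^ 2 := by ring
    exact le_of_mul_le_mul_right h7 (by positivity)
  calc ∑ p, ∑ q, x p * H p q * x q
      ≤ ∑ p, ∑ q, ((ε * (x p * x q) + (1 - ε) * (pos p * pos q + neg p * neg q))
          - if p = q then x p ^ 2 else 0) := hsum1
    _ = (∑ p, ∑ q, (ε * (x p * x q) + (1 - ε) * (pos p * pos q + neg p * neg q)))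
        - ∑ p : Fin k, ∑ q : Fin k, (if p = q then x p ^ 2 else (0:ℝ)) := by
        rw [← Finset.sum_sub_distrib]
        exact Finset.sum_congr rfl fun p _ => by rw [← Finset.sum_sub_distrib]
    _ = (1 - ε) * (P * P + N * N) - (a + b) := by rw [hgsum, hdiagsum]
    _ ≤ 0 := by linarith


section Aux
variable (k : ℕ) (H : Matrix (Fin k) (Fin k) ℝ) (hH : H.IsHermitian)

/-- eigenvector functions -/
noncomputable def evec (i : Fin k) : Fin k → ℝ := ⇑(hH.eigenvectorBasis i)

lemma evec_mulVec (i : Fin k) : H *ᵥ evec k H hH i = hH.eigenvalues i • evec k H hH i :=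
  hH.mulVec_eigenvectorBasis i

lemma evec_dot (i j : Fin k) :
    (∑ p, evec k H hH i p * evec k H hH j p) = if i = j then 1 else 0 := by
  have h := orthonormal_iff_ite.mp hH.eigenvectorBasis.orthonormal i j
  simpa [PiLp.inner_apply, RCLike.inner_apply, conj_trivial, evec, mul_comm] using h

lemma sum_eigenvalues_eq_trace_aux :
    ∑ i, hH.eigenvalues i = H.trace := by
  have hsp := hH.spectral_theorem
  have hU : star (hH.eigenvectorUnitary : Matrix (Fin k) (Fin k) ℝ) *
      (hH.eigenvectorUnitary : Matrix (Fin k) (Fin k) ℝ) = 1 :=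
    Matrix.mem_unitaryGroup_iff'.mp (hH.eigenvectorUnitary).2
  calc ∑ i, hH.eigenvalues i
      = (Matrix.diagonal (RCLike.ofReal ∘ hH.eigenvalues) : Matrix (Fin k) (Fin k) ℝ).trace := by
        rw [Matrix.trace_diagonal]; rfl
    _ = H.trace := by
        conv_rhs => rw [hsp]
        rw [Unitary.conjStarAlgAut_apply, Matrix.trace_mul_cycle, hU, Matrix.one_mul]
end Aux

/-- **Appendix Corollary.**
Let `ε = ((k−1)/k)²`. A hollow (zero-diagonal) symmetric real `k×k` matrix (`k ≥ 2`)
with off-diagonal entries in `(ε, 1]` has exactly one strictly positive eigenvalue: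
its largest eigenvalue is positive and the other `k−1` eigenvalues (with multiplicity)
are `≤ 0`. -/
theorem hollow_symmetric_one_positive_eigenvalue
    (k : ℕ) (hk : 2 ≤ k)
    (H : Matrix (Fin k) (Fin k) ℝ)
    (hH : H.IsHermitian)
    (hdiag : ∀ p, H p p = 0)
    (hlb : ∀ p q, p ≠ q → (((k : ℝ) - 1) / (k : ℝ)) ^ 2 < H p q)
    (hub : ∀ p q, p ≠ q → H p q ≤ 1) :
    (∃ j₀, (∀ j, hH.eigenvalues j ≤ hH.eigenvalues j₀) ∧ 0 < hH.eigenvalues j₀) ∧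
      (Finset.univ.filter fun j => 0 < hH.eigenvalues j).card = 1 := by
  classical
  have key := quad_nonpos k hk H hdiag hlb hub
  -- Q y = y ⬝ᵥ (H *ᵥ y)
  have hQ : ∀ y : Fin k → ℝ, ∑ p, ∑ q, y p * H p q * y q = y ⬝ᵥ (H *ᵥ y) := by
    intro y
    simp only [dotProduct, mulVec, Finset.mul_sum]
    exact Finset.sum_congr rfl fun p _ => Finset.sum_congr rfl fun q _ => by ring
  have hdij : ∀ (c d : ℝ) (i' j' : Fin k),
      (c • evec k H hH i') ⬝ᵥ (d • evec k H hH j') = c * d * (if i' = j' then 1 else 0) := by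
    intro c d i' j'
    rw [smul_dotProduct, dotProduct_smul, smul_eq_mul, smul_eq_mul, ← mul_assoc]
    congr 1
    exact evec_dot k H hH i' j'
  -- no two distinct positive eigenvalues
  have no_two_pos : ∀ i j, i ≠ j → 0 < hH.eigenvalues i → 0 < hH.eigenvalues j → False := by
    intro i j hij hi hj
    obtain ⟨α, β, hsum0, hne⟩ :
        ∃ α β : ℝ, α * (∑ p, evec k H hH i p) + β * (∑ p, evec k H hH j p) = 0
          ∧ (α ≠ 0 ∨ β ≠ 0) := by
      by_cases h0 : (∑ p, evec k H hH i p) = 0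
      · exact ⟨1, 0, by rw [h0]; ring, Or.inl one_ne_zero⟩
      · exact ⟨∑ p, evec k H hH j p, -(∑ p, evec k H hH i p), by ring,
          Or.inr (neg_ne_zero.mpr h0)⟩
    set x : Fin k → ℝ := α • evec k H hH i + β • evec k H hH j with hxdef
    have hx : ∑ p, x p = 0 := by
      simp only [hxdef, Pi.add_apply, Pi.smul_apply, smul_eq_mul]
      rw [Finset.sum_add_distrib, ← Finset.mul_sum, ← Finset.mul_sum]
      exact hsum0
    have hval : x ⬝ᵥ (H *ᵥ x) = α ^ 2 * hH.eigenvalues i + β ^ 2 * hH.eigenvalues j := by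
      rw [hxdef, mulVec_add, mulVec_smul, mulVec_smul, evec_mulVec, evec_mulVec,
        smul_smul, smul_smul, dotProduct_add, add_dotProduct, add_dotProduct,
        hdij, hdij, hdij, hdij, if_pos rfl, if_pos rfl, if_neg hij, if_neg (Ne.symm hij)]
      ring
    have hpos : 0 < x ⬝ᵥ (H *ᵥ x) := by
      rw [hval]
      rcases hne with hα | hβ
      · have h1 : 0 < α ^ 2 := by positivity
        nlinarith [mul_nonneg (sq_nonneg β) hj.le]
      · have h1 : 0 < β ^ 2 := by positivity
        nlinarith [mul_nonneg (sq_nonneg α) hi.le]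
    have := key x hx
    rw [hQ x] at this
    linarith
  -- there is a positive eigenvalue
  have hexists : ∃ j, 0 < hH.eigenvalues j := by
    by_contra hcon
    push_neg at hcon
    have htr : ∑ i, hH.eigenvalues i = 0 := by
      rw [sum_eigenvalues_eq_trace_aux]
      simp [Matrix.trace, Matrix.diag, hdiag]
    have hz : ∀ j, hH.eigenvalues j = 0 := by
      have h0 : ∑ i, -hH.eigenvalues i = 0 := by
        rw [Finset.sum_neg_distrib, htr, neg_zero]
      have := (Finset.sum_eq_zero_iff_of_nonneg
        (fun i _ => neg_nonneg.mpr (hcon i))).mp h0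
      intro j
      have := this j (Finset.mem_univ j)
      linarith
    have hH0 : H = 0 := by
      have hsp := hH.spectral_theorem
      rw [show hH.eigenvalues = 0 from funext hz] at hsp
      rwa [Pi.comp_zero, RCLike.ofReal_zero,
        (by rfl : Function.const (Fin k) (0 : ℝ) = fun _ ↦ 0), Matrix.diagonal_zero,
        map_zero] at hsp
    have hne : (⟨0, by omega⟩ : Fin k) ≠ ⟨1, by omega⟩ := by simp [Fin.ext_iff]
    have := hlb _ _ hne
    rw [hH0] at this
    simp only [Matrix.zero_apply] at this
    nlinarith [sq_nonneg (((k : ℝ) - 1) / (k : ℝ))]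
  obtain ⟨j', hj'⟩ := hexists
  obtain ⟨j₀, -, hmax⟩ := Finset.exists_max_image (Finset.univ : Finset (Fin k))
    hH.eigenvalues ⟨j', Finset.mem_univ _⟩
  have hmax' : ∀ j, hH.eigenvalues j ≤ hH.eigenvalues j₀ := fun j => hmax j (Finset.mem_univ j)
  have hj₀pos : 0 < hH.eigenvalues j₀ := lt_of_lt_of_le hj' (hmax' j')
  refine ⟨⟨j₀, hmax', hj₀pos⟩, ?_⟩
  rw [Finset.card_eq_one]
  refine ⟨j₀, Finset.eq_singleton_iff_unique_mem.mpr ⟨?_, ?_⟩⟩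
  · exact Finset.mem_filter.mpr ⟨Finset.mem_univ _, hj₀pos⟩
  · intro j hj
    by_contra hne
    exact no_two_pos j j₀ hne (Finset.mem_filter.mp hj).2 hj₀pos
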